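/- Perturbative comparison of measurement dynamics: let (Φ^{(k)}_{ξ_1,…,ξ_k}) and (Φ̃_ξ) be trace-nonincreasing completely positive maps on trace-class operators over a finite-dimensional H, such that (i) ‖Φ^{(k)}_{…,ξ} − Φ̃_ξ‖ ≤ d₁‖Φ̃_ξ‖ and (ii) Tr(Φ̃_ξ[ρ]) ≥ d₂‖Φ̃_ξ‖ for all density matrices ρ, with 0 ≤ d₁ < d₂ ≤ 1 and d := d₂−d₁ < 1. Then for all trace-class ρ₁, ρ₂: ‖Φ^{(n)}_{…,ξ_n}[ρ₁] − Φ̃_{ξ_n}[ρ₂]‖ ≤ ‖Φ̃_{ξ_n}‖(d₁‖ρ₁‖ + ‖ρ₁−ρ₂‖), and iterating, for any density matrix ρ̂ and any length-r protocol, ‖Φ^{(k+r)}∘⋯∘Φ^{(k+1)}[ρ̂] − Φ̃_{ξ_r}∘⋯∘Φ̃_{ξ_1}[ρ̂]‖ ≤ (d₁/(d^{-1}−1))·d^{-r-1}·Tr(Φ^{(k+r)}∘⋯∘Φ^{(k+1)}[ρ̂]). -/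

import Mathlib

open Matrix
open scoped BigOperators ComplexOrder

/-- The trace norm `‖A‖₁ = Tr √(AᴴA)` of a complex matrix. -/
noncomputable def traceNorm {m : Type*} [Fintype m] [DecidableEq m] (A : Matrix m m ℂ) : ℝ :=
  (((Matrix.posSemidef_conjTranspose_mul_self A).1.eigenvectorUnitary : Matrix m m ℂ) *
      diagonal ((fun x : ℝ => (x : ℂ)) ∘ (Real.sqrt ·) ∘ (Matrix.posSemidef_conjTranspose_mul_self A).1.eigenvalues) *
      (star (Matrix.posSemidef_conjTranspose_mul_self A).1.eigenvectorUnitary : Matrix m m ℂ)).trace.re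

/-- The operator norm of a linear map on matrices, with respect to the trace norm. -/
noncomputable def traceMapNorm {m : Type*} [Fintype m] [DecidableEq m]
    (Φ : Matrix m m ℂ →ₗ[ℂ] Matrix m m ℂ) : ℝ :=
  sSup {r | ∃ X : Matrix m m ℂ, traceNorm X ≤ 1 ∧ r = traceNorm (Φ X)}

/-- A linear map on matrices is completely positive if all its finite amplifications
`Φ ⊗ id_n` preserve positive semidefiniteness. -/
def IsCompletelyPositive {m : Type*} [Fintype m] [DecidableEq m]
    (Φ : Matrix m m ℂ →ₗ[ℂ] Matrix m m ℂ) : Prop :=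
  ∀ (n : ℕ) (A : Matrix (m × Fin n) (m × Fin n) ℂ), A.PosSemidef →
    (Matrix.of fun p q : m × Fin n =>
      Φ (Matrix.of fun a b => A (a, p.2) (b, q.2)) p.1 q.1).PosSemidef

/-- The true (protocol-dependent) dynamics applied along the protocol segment `ξl`, given
the previous protocol `η`: `ρ̂(ξ^{(r)} | η^{(k)}) = Φ^{(k+r)} ∘ ⋯ ∘ Φ^{(k+1)} [ρ̂]`, where
`Φ^{(j)}` may depend on the whole protocol up to step `j` (here encoded as a list). -/
def chain {σ m : Type*} [Fintype m] [DecidableEq m]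
    (Φ : List σ → (Matrix m m ℂ →ₗ[ℂ] Matrix m m ℂ)) :
    List σ → List σ → Matrix m m ℂ → Matrix m m ℂ
  | _, [], ρ => ρ
  | η, ξ :: t, ρ => chain Φ (η ++ [ξ]) t (Φ (η ++ [ξ]) ρ)

/-- The non-demolition comparison dynamics `Φ̃_{ξ_r} ∘ ⋯ ∘ Φ̃_{ξ_1} [ρ̂]` along the
protocol segment `ξl = (ξ_1, …, ξ_r)`. -/
def tchain {σ m : Type*} [Fintype m] [DecidableEq m]
    (Φt : σ → (Matrix m m ℂ →ₗ[ℂ] Matrix m m ℂ)) :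
    List σ → Matrix m m ℂ → Matrix m m ℂ
  | [], ρ => ρ
  | ξ :: t, ρ => tchain Φt t (Φt ξ ρ)

set_option linter.unusedSectionVars false
section TNsec
namespace TN
variable {m : Type*} [Fintype m] [DecidableEq m]

variable {m : Type*} [Fintype m] [DecidableEq m]

noncomputable def cnorm (v : m → ℂ) : ℝ := Real.sqrt (star v ⬝ᵥ v).re

lemma dot_star_self_re (v : m → ℂ) : (star v ⬝ᵥ v).re = ∑ i, Complex.normSq (v i) := by
  simp [dotProduct, Complex.re_sum, Complex.normSq_apply]

lemma dot_star_self_re_nonneg (v : m → ℂ) : 0 ≤ (star v ⬝ᵥ v).re := by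
  rw [dot_star_self_re]; exact Finset.sum_nonneg fun i _ => Complex.normSq_nonneg _

lemma cnorm_nonneg (v : m → ℂ) : 0 ≤ cnorm v := Real.sqrt_nonneg _

lemma cnorm_sq (v : m → ℂ) : cnorm v ^ 2 = (star v ⬝ᵥ v).re :=
  Real.sq_sqrt (dot_star_self_re_nonneg v)

lemma cnorm_eq_norm (v : m → ℂ) :
    cnorm v = ‖(WithLp.equiv 2 (m → ℂ)).symm v‖ := by
  rw [cnorm, EuclideanSpace.norm_eq, dot_star_self_re]
  congr 1
  apply Finset.sum_congr rfl
  intro i _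
  simp [Complex.normSq_eq_norm_sq]

lemma cauchy_schwarz (u v : m → ℂ) : ‖star u ⬝ᵥ v‖ ≤ cnorm u * cnorm v := by
  have h := norm_inner_le_norm (𝕜 := ℂ) ((WithLp.equiv 2 (m → ℂ)).symm u)
      ((WithLp.equiv 2 (m → ℂ)).symm v)
  rw [EuclideanSpace.inner_eq_star_dotProduct] at h
  simpa [cnorm_eq_norm, dotProduct_comm] using h

lemma cnorm_mono {u v : m → ℂ} (h : (star u ⬝ᵥ u).re ≤ (star v ⬝ᵥ v).re) :
    cnorm u ≤ cnorm v := Real.sqrt_le_sqrt h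

/-- `B` is a contraction for the Euclidean norm. -/
def Con (B : Matrix m m ℂ) : Prop := ∀ v, cnorm (B *ᵥ v) ≤ cnorm v

lemma con_one : Con (1 : Matrix m m ℂ) := fun v => by rw [one_mulVec]

/-- adjoint identity -/
lemma star_mulVec_dot (B : Matrix m m ℂ) (v w : m → ℂ) :
    star (B *ᵥ v) ⬝ᵥ w = star v ⬝ᵥ (Bᴴ *ᵥ w) := by
  rw [star_mulVec, dotProduct_mulVec]

lemma con_conjTranspose {B : Matrix m m ℂ} (hB : Con B) : Con Bᴴ := by
  intro v
  have h1 : cnorm (Bᴴ *ᵥ v) ^ 2 ≤ cnorm v * cnorm (Bᴴ *ᵥ v) := by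
    rw [cnorm_sq]
    have e : star (Bᴴ *ᵥ v) ⬝ᵥ (Bᴴ *ᵥ v) = star v ⬝ᵥ (B *ᵥ (Bᴴ *ᵥ v)) := by
      rw [star_mulVec_dot, conjTranspose_conjTranspose]
    rw [e]
    calc (star v ⬝ᵥ (B *ᵥ (Bᴴ *ᵥ v))).re ≤ ‖star v ⬝ᵥ (B *ᵥ (Bᴴ *ᵥ v))‖ :=
          Complex.re_le_norm _
      _ ≤ cnorm v * cnorm (B *ᵥ (Bᴴ *ᵥ v)) := cauchy_schwarz _ _
      _ ≤ cnorm v * cnorm (Bᴴ *ᵥ v) := by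
          exact mul_le_mul_of_nonneg_left (hB _) (cnorm_nonneg _)
  rcases eq_or_lt_of_le (cnorm_nonneg (Bᴴ *ᵥ v)) with h | h
  · rw [← h]; exact cnorm_nonneg _
  · nlinarith [cnorm_nonneg v]

lemma con_stdBasisMatrix (i j : m) : Con (single i j (1 : ℂ)) := by
  intro v
  have e : single i j (1 : ℂ) *ᵥ v = Pi.single i (v j) := by
    rw [single_mulVec, one_mul]; rfl
  rw [e]
  apply cnorm_mono
  rw [dot_star_self_re, dot_star_self_re]
  have h1 : ∑ k, Complex.normSq ((Pi.single i (v j) : m → ℂ) k) = Complex.normSq (v j) := by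
    simp [Pi.single_apply, apply_ite Complex.normSq]
  rw [h1]
  exact Finset.single_le_sum (fun k _ => Complex.normSq_nonneg _) (Finset.mem_univ j)

section spectra
variable (A : Matrix m m ℂ)

private noncomputable abbrev hpsd := Matrix.posSemidef_conjTranspose_mul_self A
private noncomputable abbrev V : Matrix m m ℂ := ((hpsd A).1.eigenvectorUnitary : Matrix m m ℂ)
private noncomputable abbrev lam : m → ℝ := (hpsd A).1.eigenvalues
private noncomputable abbrev col (i : m) : m → ℂ := fun j => V A j i

lemma V_star_mul_V : star (V A) * V A = 1 :=
  mem_unitaryGroup_iff'.mp (hpsd A).1.eigenvectorUnitary.2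

lemma V_mul_star_V : V A * star (V A) = 1 :=
  mem_unitaryGroup_iff.mp (hpsd A).1.eigenvectorUnitary.2

lemma lam_nonneg (i : m) : 0 ≤ lam A i := (hpsd A).eigenvalues_nonneg i

lemma diag_spectral : star (V A) * (Aᴴ * A) * V A = diagonal (fun i => (lam A i : ℂ)) := by
  have := (hpsd A).1.conjStarAlgAut_star_eigenvectorUnitary
  rw [Unitary.conjStarAlgAut_star_apply] at this
  exact this

lemma trace_conj_V (M : Matrix m m ℂ) : (star (V A) * M * V A).trace = M.trace := by
  rw [trace_mul_cycle, V_mul_star_V, one_mul]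

lemma entry_conj_V (M : Matrix m m ℂ) (i : m) :
    (star (V A) * M * V A) i i = star (col A i) ⬝ᵥ (M *ᵥ col A i) := by
  simp only [Matrix.mul_apply, Matrix.star_apply, mulVec, dotProduct, Finset.sum_mul,
    Finset.mul_sum, star_eq_conjTranspose, conjTranspose_apply, Pi.star_apply]
  rw [Finset.sum_comm]
  apply Finset.sum_congr rfl
  intro j _
  apply Finset.sum_congr rfl
  intro k _
  ring

lemma traceNorm_eq_sum : traceNorm A = ∑ i, Real.sqrt (lam A i) := by
  rw [traceNorm]
  rw [trace_mul_cycle]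
  rw [show (star (hpsd A).1.eigenvectorUnitary : Matrix m m ℂ) * (hpsd A).1.eigenvectorUnitary
      = 1 from V_star_mul_V A, one_mul, trace_diagonal]
  rw [Complex.re_sum]
  apply Finset.sum_congr rfl
  intro i _
  simp

lemma traceNorm_nonneg : 0 ≤ traceNorm A := by
  rw [traceNorm_eq_sum]
  exact Finset.sum_nonneg fun i _ => Real.sqrt_nonneg _

lemma cnorm_col (i : m) : cnorm (col A i) = 1 := by
  have h : star (col A i) ⬝ᵥ col A i = (star (V A) * V A) i i := by
    simp [Matrix.mul_apply, dotProduct, star_eq_conjTranspose, conjTranspose_apply]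
  rw [cnorm, h, V_star_mul_V]
  simp

lemma cnorm_A_col (i : m) : cnorm (A *ᵥ col A i) = Real.sqrt (lam A i) := by
  have h : star (A *ᵥ col A i) ⬝ᵥ (A *ᵥ col A i) = (lam A i : ℂ) := by
    rw [star_mulVec_dot, mulVec_mulVec, ← entry_conj_V, diag_spectral, diagonal_apply_eq]
  rw [cnorm, h]
  simp

lemma trace_expand (B : Matrix m m ℂ) :
    (B * A).trace = ∑ i, star (col A i) ⬝ᵥ (B *ᵥ (A *ᵥ col A i)) := by
  rw [← trace_conj_V A (B * A), Matrix.trace]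
  apply Finset.sum_congr rfl
  intro i _
  rw [Matrix.diag_apply, entry_conj_V, ← mulVec_mulVec]

lemma key1 {B : Matrix m m ℂ} (hB : Con B) : ‖(B * A).trace‖ ≤ traceNorm A := by
  rw [trace_expand, traceNorm_eq_sum]
  calc ‖∑ i, star (col A i) ⬝ᵥ (B *ᵥ (A *ᵥ col A i))‖
      ≤ ∑ i, ‖star (col A i) ⬝ᵥ (B *ᵥ (A *ᵥ col A i))‖ := by
        exact norm_sum_le _ _
    _ ≤ ∑ i, Real.sqrt (lam A i) := by
        apply Finset.sum_le_sum
        intro i _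
        calc ‖star (col A i) ⬝ᵥ (B *ᵥ (A *ᵥ col A i))‖
            ≤ cnorm (col A i) * cnorm (B *ᵥ (A *ᵥ col A i)) := cauchy_schwarz _ _
          _ ≤ 1 * cnorm (A *ᵥ col A i) := by
              rw [cnorm_col]
              exact mul_le_mul_of_nonneg_left (hB _) zero_le_one
          _ = Real.sqrt (lam A i) := by rw [one_mul, cnorm_A_col]

private noncomputable abbrev sa (P : Matrix m m ℂ) : Matrix m m ℂ := V A * P * star (V A)

lemma sa_mul (P Q : Matrix m m ℂ) : sa A P * sa A Q = sa A (P * Q) := by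
  have h := V_star_mul_V A
  calc V A * P * star (V A) * (V A * Q * star (V A))
      = V A * P * (star (V A) * V A) * Q * star (V A) := by
        simp only [mul_assoc]
    _ = V A * (P * Q) * star (V A) := by rw [h, mul_one]; simp only [mul_assoc]

lemma sa_trace (P : Matrix m m ℂ) : (sa A P).trace = P.trace := by
  rw [sa, trace_mul_cycle, V_star_mul_V, one_mul]

private noncomputable abbrev Dinv : Matrix m m ℂ :=
  diagonal (fun i => if lam A i = 0 then 0 else ((Real.sqrt (lam A i))⁻¹ : ℂ))

private noncomputable abbrev Umat : Matrix m m ℂ := A * sa A (Dinv A)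

lemma sqrt_lam_ne {i : m} (h : lam A i ≠ 0) : Real.sqrt (lam A i) ≠ 0 := by
  intro hc
  exact h (le_antisymm (by nlinarith [Real.sq_sqrt (lam_nonneg A i)]) (lam_nonneg A i))

lemma Dinv_herm : (sa A (Dinv A))ᴴ = sa A (Dinv A) := by
  rw [sa, conjTranspose_mul, conjTranspose_mul, star_eq_conjTranspose,
    conjTranspose_conjTranspose, diagonal_conjTranspose]
  rw [show star (fun i => if lam A i = 0 then 0 else ((Real.sqrt (lam A i))⁻¹ : ℂ))
      = fun i => if lam A i = 0 then 0 else ((Real.sqrt (lam A i))⁻¹ : ℂ) by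
    funext i
    by_cases h : lam A i = 0 <;> simp [h, Pi.star_apply, ← Complex.ofReal_inv]]
  rw [mul_assoc]

lemma hAA_spectral : Aᴴ * A = sa A (diagonal (fun i => (lam A i : ℂ))) := by
  have h := diag_spectral A
  calc Aᴴ * A = V A * (star (V A) * (Aᴴ * A) * V A) * star (V A) := by
        rw [← mul_assoc, ← mul_assoc, V_mul_star_V, one_mul, mul_assoc, mul_assoc,
          V_mul_star_V, mul_one]
    _ = _ := by rw [h, sa, mul_assoc, ← mul_assoc]

lemma Umat_conjTranspose : (Umat A)ᴴ = sa A (Dinv A) * Aᴴ := by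
  rw [Umat, conjTranspose_mul, Dinv_herm]

lemma Umat_star_mul_A :
    (Umat A)ᴴ * A = sa A (diagonal (fun i => ((Real.sqrt (lam A i) : ℝ) : ℂ))) := by
  rw [Umat_conjTranspose, mul_assoc, hAA_spectral, sa_mul, diagonal_mul_diagonal]
  have hfun : (fun i => (if lam A i = 0 then 0 else ((Real.sqrt (lam A i))⁻¹ : ℂ)) * (lam A i : ℂ))
      = fun i => ((Real.sqrt (lam A i) : ℝ) : ℂ) := by
    funext i
    by_cases h : lam A i = 0
    · simp [h, Real.sqrt_eq_zero', le_of_eq h.symm]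
    · simp only [h, if_false]
      rw [show (lam A i : ℂ) = ((Real.sqrt (lam A i) : ℝ) : ℂ) * ((Real.sqrt (lam A i) : ℝ) : ℂ) by
        rw [← Complex.ofReal_mul, Real.mul_self_sqrt (lam_nonneg A i)]]
      rw [← mul_assoc, inv_mul_cancel₀ (by exact_mod_cast sqrt_lam_ne A h), one_mul]
  rw [hfun]

lemma Umat_star_mul_self :
    (Umat A)ᴴ * Umat A = sa A (diagonal (fun i => if lam A i = 0 then (0:ℂ) else 1)) := by
  rw [show (Umat A)ᴴ * Umat A = ((Umat A)ᴴ * A) * sa A (Dinv A) by rw [Umat, mul_assoc]]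
  rw [Umat_star_mul_A, sa_mul, diagonal_mul_diagonal]
  have hfun : (fun i => ((Real.sqrt (lam A i) : ℝ) : ℂ) *
      (if lam A i = 0 then 0 else ((Real.sqrt (lam A i))⁻¹ : ℂ)))
      = fun i => if lam A i = 0 then (0:ℂ) else 1 := by
    funext i
    by_cases h : lam A i = 0
    · simp [h]
    · simp only [h, if_false]
      rw [← Complex.ofReal_inv, ← Complex.ofReal_mul,
        mul_inv_cancel₀ (sqrt_lam_ne A h), Complex.ofReal_one]
  rw [hfun]

lemma trace_Umat_star_mul_A : ((Umat A)ᴴ * A).trace = (traceNorm A : ℂ) := by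
  rw [Umat_star_mul_A, sa_trace, trace_diagonal, traceNorm_eq_sum]
  push_cast
  rfl

lemma dot_V (v w : m → ℂ) : star v ⬝ᵥ (V A *ᵥ w) = star (star (V A) *ᵥ v) ⬝ᵥ w := by
  have h := star_mulVec_dot (star (V A)) v w
  rw [star_eq_conjTranspose, conjTranspose_conjTranspose] at h
  rw [← star_eq_conjTranspose] at h
  exact h.symm

lemma dot_sandwich (P : Matrix m m ℂ) (v : m → ℂ) :
    star v ⬝ᵥ (sa A P *ᵥ v) = star (star (V A) *ᵥ v) ⬝ᵥ (P *ᵥ (star (V A) *ᵥ v)) := by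
  rw [sa, show (V A * P * star (V A)) *ᵥ v = V A *ᵥ (P *ᵥ (star (V A) *ᵥ v)) by
    rw [mulVec_mulVec, mulVec_mulVec], dot_V]

lemma cnorm_starV (v : m → ℂ) : star (star (V A) *ᵥ v) ⬝ᵥ (star (V A) *ᵥ v) = star v ⬝ᵥ v := by
  rw [← dot_V, mulVec_mulVec, V_mul_star_V, one_mulVec]

lemma con_Umat : Con (Umat A) := by
  intro v
  apply cnorm_mono
  have e1 : star (Umat A *ᵥ v) ⬝ᵥ (Umat A *ᵥ v)
      = star v ⬝ᵥ (((Umat A)ᴴ * Umat A) *ᵥ v) := by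
    rw [star_mulVec_dot, mulVec_mulVec]
  rw [e1, Umat_star_mul_self, dot_sandwich]
  set w := star (V A) *ᵥ v with hw
  rw [← cnorm_starV A v, ← hw]
  have e2 : ∀ i, (diagonal (fun i => if lam A i = 0 then (0:ℂ) else 1) *ᵥ w) i
      = (if lam A i = 0 then (0:ℂ) else 1) * w i := by
    intro i
    simp [mulVec, dotProduct, diagonal_apply, ite_and, Finset.sum_ite_eq]
  rw [show star w ⬝ᵥ (diagonal (fun i => if lam A i = 0 then (0:ℂ) else 1) *ᵥ w)
      = ∑ i, star (w i) * ((if lam A i = 0 then (0:ℂ) else 1) * w i) by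
    rw [dotProduct]; exact Finset.sum_congr rfl fun i _ => by rw [e2, Pi.star_apply]]
  rw [show star w ⬝ᵥ w = ∑ i, star (w i) * w i from rfl]
  rw [Complex.re_sum, Complex.re_sum]
  apply Finset.sum_le_sum
  intro i _
  by_cases h : lam A i = 0
  · simp only [h, if_true, zero_mul, mul_zero, Complex.zero_re]
    rw [show star (w i) * w i = Complex.normSq (w i) by
      rw [Complex.normSq_eq_conj_mul_self]; rfl]
    exact_mod_cast Complex.normSq_nonneg _
  · simp [h]

lemma key2 : ∃ B : Matrix m m ℂ, Con B ∧ (B * A).trace = (traceNorm A : ℂ) :=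
  ⟨(Umat A)ᴴ, con_conjTranspose (con_Umat A), trace_Umat_star_mul_A A⟩

end spectra
variable {m : Type*} [Fintype m] [DecidableEq m]

lemma re_trace_mul_le {A B : Matrix m m ℂ} (hB : Con B) :
    ((B * A).trace).re ≤ traceNorm A :=
  (Complex.re_le_norm _).trans (key1 A hB)

lemma traceNorm_add_le (A B : Matrix m m ℂ) :
    traceNorm (A + B) ≤ traceNorm A + traceNorm B := by
  obtain ⟨C, hC, hTr⟩ := key2 (A + B)
  have h : traceNorm (A + B) = ((C * A).trace).re + ((C * B).trace).re := by
    have e : C * (A + B) = C * A + C * B := by rw [mul_add]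
    have := congrArg Complex.re hTr
    rw [e, trace_add, Complex.add_re, Complex.ofReal_re] at this
    linarith
  rw [h]
  exact add_le_add (re_trace_mul_le hC) (re_trace_mul_le hC)

lemma traceNorm_smul (c : ℂ) (A : Matrix m m ℂ) :
    traceNorm (c • A) = ‖c‖ * traceNorm A := by
  have hle : ∀ (c : ℂ) (A : Matrix m m ℂ), traceNorm (c • A) ≤ ‖c‖ * traceNorm A := by
    intro c A
    obtain ⟨B, hB, hTr⟩ := key2 (c • A)
    have h := key1 A hB
    have e : (traceNorm (c • A) : ℂ) = c * (B * A).trace := by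
      rw [← hTr, Matrix.mul_smul, trace_smul, smul_eq_mul]
    have h2 : traceNorm (c • A) = ‖c * (B * A).trace‖ := by
      rw [← e, Complex.norm_real, Real.norm_of_nonneg (traceNorm_nonneg _)]
    rw [h2, norm_mul]
    exact mul_le_mul_of_nonneg_left h (norm_nonneg _)
  apply le_antisymm (hle c A)
  by_cases hc : c = 0
  · subst hc
    simpa using traceNorm_nonneg (0 : Matrix m m ℂ)
  · have h := hle c⁻¹ (c • A)
    rw [smul_smul, inv_mul_cancel₀ hc, one_smul, norm_inv] at h
    have hc' : 0 < ‖c‖ := norm_pos_iff.mpr hc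
    calc ‖c‖ * traceNorm A ≤ ‖c‖ * (‖c‖⁻¹ * traceNorm (c • A)) :=
          mul_le_mul_of_nonneg_left h hc'.le
      _ = traceNorm (c • A) := by field_simp

lemma traceNorm_zero : traceNorm (0 : Matrix m m ℂ) = 0 := by
  have := traceNorm_smul (0 : ℂ) (0 : Matrix m m ℂ)
  simpa using this

lemma traceNorm_neg (A : Matrix m m ℂ) : traceNorm (-A) = traceNorm A := by
  have := traceNorm_smul (-1 : ℂ) A
  simpa using this

lemma traceNorm_sub_le (A B : Matrix m m ℂ) :
    traceNorm (A - B) ≤ traceNorm A + traceNorm B := by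
  rw [sub_eq_add_neg]
  exact (traceNorm_add_le A (-B)).trans (by rw [traceNorm_neg])

lemma re_trace_le_traceNorm (A : Matrix m m ℂ) : (A.trace).re ≤ traceNorm A := by
  have := re_trace_mul_le (A := A) (B := 1) con_one
  rwa [one_mul] at this

lemma neg_traceNorm_le_re_trace (A : Matrix m m ℂ) : -(traceNorm A) ≤ (A.trace).re := by
  have := re_trace_le_traceNorm (-A)
  rw [trace_neg, Complex.neg_re, traceNorm_neg] at this
  linarith

lemma entry_abs_le_traceNorm (A : Matrix m m ℂ) (i j : m) :
    ‖A i j‖ ≤ traceNorm A := by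
  have hcon := con_stdBasisMatrix (m := m) j i
  have h := key1 A hcon
  rwa [show (single j i (1:ℂ) * A).trace = A i j by
    simp [Matrix.trace, Matrix.diag, Matrix.mul_apply, single, ite_and,
      Finset.sum_ite_eq]] at h

section psd
variable {m : Type*} [Fintype m] [DecidableEq m]

lemma psd_re_trace_eq_sum {B : Matrix m m ℂ} :
    ((Bᴴ * B).trace).re = ∑ k, ∑ i, Complex.normSq (B i k) := by
  rw [Matrix.trace, Complex.re_sum]
  apply Finset.sum_congr rfl
  intro k _
  rw [Matrix.diag_apply, Matrix.mul_apply, Complex.re_sum]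
  apply Finset.sum_congr rfl
  intro i _
  rw [conjTranspose_apply]
  simp [Complex.normSq_apply, Complex.mul_re]

open scoped MatrixOrder in
lemma psd_factor {A : Matrix m m ℂ} (hA : A.PosSemidef) : ∃ B : Matrix m m ℂ, A = Bᴴ * B := by
  obtain ⟨B, rfl⟩ := CStarAlgebra.nonneg_iff_eq_star_mul_self.mp hA.nonneg
  exact ⟨B, by rw [star_eq_conjTranspose]⟩

lemma psd_re_trace_nonneg {A : Matrix m m ℂ} (hA : A.PosSemidef) : 0 ≤ (A.trace).re := by
  obtain ⟨B, rfl⟩ := psd_factor hA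
  rw [psd_re_trace_eq_sum]
  exact Finset.sum_nonneg fun k _ => Finset.sum_nonneg fun i _ => Complex.normSq_nonneg _

lemma psd_trace_zero {A : Matrix m m ℂ} (hA : A.PosSemidef) (h : (A.trace).re = 0) :
    A = 0 := by
  obtain ⟨B, rfl⟩ := psd_factor hA
  rw [psd_re_trace_eq_sum] at h
  have hB : B = 0 := by
    ext i k
    have h1 : ∑ k, ∑ i, Complex.normSq (B i k) = 0 := h
    have h2 : ∀ k ∈ Finset.univ, ∀ i ∈ Finset.univ, Complex.normSq (B i k) = 0 := by
      intro k _
      have := (Finset.sum_eq_zero_iff_of_nonneg (fun k _ =>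
        Finset.sum_nonneg fun i _ => Complex.normSq_nonneg (B i k))).mp h1 k (Finset.mem_univ k)
      exact fun i hi => (Finset.sum_eq_zero_iff_of_nonneg
        (fun i _ => Complex.normSq_nonneg _)).mp this i hi
    exact Complex.normSq_eq_zero.mp (h2 k (Finset.mem_univ k) i (Finset.mem_univ i))
  rw [hB]
  simp

lemma psd_trace_real {A : Matrix m m ℂ} (hA : A.PosSemidef) :
    A.trace = ((A.trace).re : ℂ) := by
  have h := trace_conjTranspose A
  rw [hA.1] at h
  have h2 : (starRingEnd ℂ) A.trace = A.trace := h.symm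
  exact (Complex.conj_eq_iff_re.mp h2).symm

lemma psd_traceNorm {A : Matrix m m ℂ} (hA : A.PosSemidef) :
    traceNorm A = (A.trace).re := by
  apply le_antisymm _ (re_trace_le_traceNorm A)
  obtain ⟨C, hC, hTr⟩ := key2 A
  obtain ⟨B, rfl⟩ := psd_factor hA
  have e1 : traceNorm (Bᴴ * B) = ((C * (Bᴴ * B)).trace).re := by rw [hTr, Complex.ofReal_re]
  rw [e1, psd_re_trace_eq_sum]
  set u : m → m → ℂ := fun i j => star (B i j) with hu
  have e2 : (C * (Bᴴ * B)).trace = ∑ i, star (u i) ⬝ᵥ (C *ᵥ u i) := by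
    rw [← Matrix.mul_assoc, trace_mul_cycle]
    simp only [Matrix.trace, Matrix.diag, Matrix.mul_apply, dotProduct, mulVec, hu,
      Pi.star_apply, star_star, conjTranspose_apply, Finset.sum_mul, Finset.mul_sum]
    apply Finset.sum_congr rfl
    intro i _
    rw [Finset.sum_comm]
    apply Finset.sum_congr rfl
    intro j _
    apply Finset.sum_congr rfl
    intro k _
    ring
  have e3 : ∀ i, cnorm (u i) ^ 2 = ∑ j, Complex.normSq (B i j) := by
    intro i
    rw [cnorm_sq, dot_star_self_re]
    simp [hu, Complex.normSq_conj]
  rw [e2, Finset.sum_comm]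
  calc (∑ i, star (u i) ⬝ᵥ (C *ᵥ u i)).re ≤ ‖∑ i, star (u i) ⬝ᵥ (C *ᵥ u i)‖ :=
        Complex.re_le_norm _
    _ ≤ ∑ i, ‖star (u i) ⬝ᵥ (C *ᵥ u i)‖ := norm_sum_le _ _
    _ ≤ ∑ i, cnorm (u i) ^ 2 := by
        apply Finset.sum_le_sum
        intro i _
        calc ‖star (u i) ⬝ᵥ (C *ᵥ u i)‖ ≤ cnorm (u i) * cnorm (C *ᵥ u i) := cauchy_schwarz _ _
          _ ≤ cnorm (u i) * cnorm (u i) :=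
              mul_le_mul_of_nonneg_left (hC _) (cnorm_nonneg _)
          _ = cnorm (u i) ^ 2 := by ring
    _ = _ := Finset.sum_congr rfl fun i _ => e3 i

lemma psd_smul_real {A : Matrix m m ℂ} (hA : A.PosSemidef) {r : ℝ} (hr : 0 ≤ r) :
    (((r : ℂ)) • A).PosSemidef :=
  hA.smul (by rw [Complex.zero_le_real]; exact hr)

end psd

section tmn
variable {m : Type*} [Fintype m] [DecidableEq m] (Φ : Matrix m m ℂ →ₗ[ℂ] Matrix m m ℂ)

lemma traceNorm_sum_le {ι : Type*} (s : Finset ι) (f : ι → Matrix m m ℂ) :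
    traceNorm (∑ i ∈ s, f i) ≤ ∑ i ∈ s, traceNorm (f i) := by
  classical
  induction s using Finset.induction_on with
  | empty => simp [traceNorm_zero]
  | insert a s h ih =>
    rw [Finset.sum_insert h, Finset.sum_insert h]
    exact (traceNorm_add_le _ _).trans (by linarith)

lemma tmn_mem_zero : (0:ℝ) ∈ {r | ∃ X : Matrix m m ℂ, traceNorm X ≤ 1 ∧ r = traceNorm (Φ X)} :=
  ⟨0, by rw [traceNorm_zero]; exact zero_le_one, by rw [map_zero, traceNorm_zero]⟩

lemma tmn_bddAbove :
    BddAbove {r | ∃ X : Matrix m m ℂ, traceNorm X ≤ 1 ∧ r = traceNorm (Φ X)} := by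
  refine ⟨∑ p : m × m, traceNorm (Φ (single p.1 p.2 1)), ?_⟩
  rintro r ⟨X, hX, rfl⟩
  have hXd : X = ∑ p : m × m, X p.1 p.2 • single p.1 p.2 (1:ℂ) := by
    conv_lhs => rw [matrix_eq_sum_single X]
    conv_rhs => rw [← Finset.univ_product_univ, Finset.sum_product]
    apply Finset.sum_congr rfl
    intro i _
    apply Finset.sum_congr rfl
    intro j _
    rw [smul_single, smul_eq_mul, mul_one]
  calc traceNorm (Φ X) = traceNorm (∑ p : m × m, X p.1 p.2 • Φ (single p.1 p.2 1)) := by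
        rw [show (∑ p : m × m, X p.1 p.2 • Φ (single p.1 p.2 1))
            = Φ (∑ p : m × m, X p.1 p.2 • single p.1 p.2 (1:ℂ)) by
          rw [map_sum]; exact Finset.sum_congr rfl fun p _ => (_root_.map_smul Φ _ _).symm]
        rw [← hXd]
    _ ≤ ∑ p : m × m, traceNorm (X p.1 p.2 • Φ (single p.1 p.2 1)) :=
        traceNorm_sum_le _ _
    _ ≤ ∑ p : m × m, traceNorm (Φ (single p.1 p.2 1)) := by
        apply Finset.sum_le_sum
        intro p _
        rw [traceNorm_smul]
        have h1 : ‖X p.1 p.2‖ ≤ 1 := (entry_abs_le_traceNorm X p.1 p.2).trans hX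
        have h2 := traceNorm_nonneg (Φ (single p.1 p.2 1))
        nlinarith

lemma tmn_nonneg : 0 ≤ traceMapNorm Φ := le_csSup (tmn_bddAbove Φ) (tmn_mem_zero Φ)

lemma tmn_bound (X : Matrix m m ℂ) :
    traceNorm (Φ X) ≤ traceMapNorm Φ * traceNorm X := by
  rcases eq_or_lt_of_le (traceNorm_nonneg X) with h | h
  · have hz : ∀ n : ℕ, (n:ℝ) * traceNorm (Φ X) ≤ traceMapNorm Φ := by
      intro n
      have hmem : (n:ℝ) * traceNorm (Φ X)
          ∈ {r | ∃ Y : Matrix m m ℂ, traceNorm Y ≤ 1 ∧ r = traceNorm (Φ Y)} := by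
        refine ⟨((n:ℝ):ℂ) • X, ?_, ?_⟩
        · rw [traceNorm_smul, ← h]
          simp
        · rw [_root_.map_smul, traceNorm_smul]
          simp
      exact le_csSup (tmn_bddAbove Φ) hmem
    by_contra hc
    push_neg at hc
    rw [← h, mul_zero] at hc
    obtain ⟨n, hn⟩ := exists_nat_gt (traceMapNorm Φ / traceNorm (Φ X))
    have h3 := hz n
    rw [div_lt_iff₀ hc] at hn
    linarith
  · have hmem : (traceNorm X)⁻¹ * traceNorm (Φ X)
        ∈ {r | ∃ Y : Matrix m m ℂ, traceNorm Y ≤ 1 ∧ r = traceNorm (Φ Y)} := by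
      refine ⟨(((traceNorm X)⁻¹ : ℝ):ℂ) • X, ?_, ?_⟩
      · rw [traceNorm_smul, Complex.norm_real, Real.norm_eq_abs,
          abs_of_nonneg (inv_nonneg.mpr (traceNorm_nonneg X)), inv_mul_cancel₀ (ne_of_gt h)]
      · rw [_root_.map_smul, traceNorm_smul, Complex.norm_real, Real.norm_eq_abs,
          abs_of_nonneg (inv_nonneg.mpr (traceNorm_nonneg X))]
    have hle := le_csSup (tmn_bddAbove Φ) hmem
    have h2 : traceNorm (Φ X) = traceNorm X * ((traceNorm X)⁻¹ * traceNorm (Φ X)) := by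
      field_simp
    rw [h2, mul_comm (traceMapNorm Φ) (traceNorm X)]
    exact mul_le_mul_of_nonneg_left hle (le_of_lt h)

end tmn

lemma cp_psd {Φ : Matrix m m ℂ →ₗ[ℂ] Matrix m m ℂ} (hΦ : IsCompletelyPositive Φ)
    {ρ : Matrix m m ℂ} (hρ : ρ.PosSemidef) : (Φ ρ).PosSemidef := by
  have h1 : (ρ.submatrix (Prod.fst : m × Fin 1 → m) Prod.fst).PosSemidef :=
    hρ.submatrix Prod.fst
  have h2 := hΦ 1 _ h1
  have e : (Φ ρ) = (Matrix.of fun p q : m × Fin 1 =>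
      Φ (Matrix.of fun a b => (ρ.submatrix (Prod.fst : m × Fin 1 → m) Prod.fst) (a, p.2) (b, q.2))
        p.1 q.1).submatrix (fun a : m => (a, (0 : Fin 1))) (fun a : m => (a, (0 : Fin 1))) := by
    ext i j
    simp only [submatrix_apply, Matrix.of_apply]
    congr 1
  rw [e]
  exact h2.submatrix _

section chains
variable {σ : Type*} (Φ : List σ → (Matrix m m ℂ →ₗ[ℂ] Matrix m m ℂ))
  (Φt : σ → (Matrix m m ℂ →ₗ[ℂ] Matrix m m ℂ))

lemma chain_snoc (t : List σ) : ∀ (η : List σ) (ξ : σ) (ρ : Matrix m m ℂ),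
    chain Φ η (t ++ [ξ]) ρ = Φ (η ++ t ++ [ξ]) (chain Φ η t ρ) := by
  induction t with
  | nil => intro η ξ ρ; simp [chain]
  | cons a t ih =>
    intro η ξ ρ
    show chain Φ (η ++ [a]) (t ++ [ξ]) (Φ (η ++ [a]) ρ) = _
    rw [ih]
    simp [chain]

lemma tchain_snoc (t : List σ) : ∀ (ξ : σ) (ρ : Matrix m m ℂ),
    tchain Φt (t ++ [ξ]) ρ = Φt ξ (tchain Φt t ρ) := by
  induction t with
  | nil => intro ξ ρ; rfl
  | cons a t ih => intro ξ ρ; exact ih ξ (Φt a ρ)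

lemma chain_psd (hCP : ∀ l, IsCompletelyPositive (Φ l)) (t : List σ) :
    ∀ (η : List σ) {ρ : Matrix m m ℂ}, ρ.PosSemidef → (chain Φ η t ρ).PosSemidef := by
  induction t with
  | nil => intro η ρ hρ; exact hρ
  | cons a t ih => intro η ρ hρ; exact ih (η ++ [a]) (cp_psd (hCP _) hρ)

lemma tchain_psd (hCP : ∀ ξ, IsCompletelyPositive (Φt ξ)) (t : List σ) :
    ∀ {ρ : Matrix m m ℂ}, ρ.PosSemidef → (tchain Φt t ρ).PosSemidef := by
  induction t with
  | nil => intro ρ hρ; exact hρ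
  | cons a t ih => intro ρ hρ; exact ih (cp_psd (hCP _) hρ)

end chains

private lemma coef_id (d d₁ : ℝ) (hd0 : 0 < d) (hd1 : d < 1) (r : ℕ) :
    d₁ * ((d ^ (r+1))⁻¹ - 1) / (1 - d) = (d₁ + d₁ * ((d ^ r)⁻¹ - 1) / (1 - d)) / d := by
  have hdr : d ^ r ≠ 0 := ne_of_gt (pow_pos hd0 r)
  have h1 : (1:ℝ) - d ≠ 0 := by linarith
  rw [pow_succ]
  field_simp
  ring

private lemma div_mul_cancel_left' (a d x : ℝ) (hd : d ≠ 0) : a / d * (d * x) = a * x := by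
  field_simp

private lemma coef_le (d d₁ : ℝ) (hd0 : 0 < d) (hd1 : d < 1) (hd₁0 : 0 ≤ d₁) (r : ℕ) :
    d₁ * ((d ^ r)⁻¹ - 1) / (1 - d) ≤ d₁ / (d⁻¹ - 1) * (d ^ (r+1))⁻¹ := by
  have hdr : (0:ℝ) < d ^ r := pow_pos hd0 r
  have h1 : (0:ℝ) < 1 - d := by linarith
  have hmid : d₁ / (d⁻¹ - 1) * (d ^ (r+1))⁻¹ = d₁ * (d ^ r)⁻¹ / (1 - d) := by
    have hinv : d⁻¹ - 1 = (1 - d)/d := by field_simp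
    rw [hinv, pow_succ]
    field_simp
  rw [hmid, div_le_div_iff₀ h1 h1]
  nlinarith

end TN
end TNsec

/-- perturbative comparison of measurement dynamics: under assumptions
(i) `‖Φ^{(k)}_{…,ξ} − Φ̃_ξ‖ ≤ d₁‖Φ̃_ξ‖` and (ii) `Tr(Φ̃_ξ[ρ]) ≥ d₂‖Φ̃_ξ‖` for density
matrices `ρ`, with `0 ≤ d₁ < d₂ ≤ 1` and `d := d₂ − d₁ < 1`, one has the one-step
estimate `‖Φ^{(n)}[ρ₁] − Φ̃_{ξ_n}[ρ₂]‖ ≤ ‖Φ̃_{ξ_n}‖ (d₁‖ρ₁‖ + ‖ρ₁ − ρ₂‖)` and, by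
iteration, for any density matrix `ρ̂` and any length-`r` protocol segment,
`‖Φ^{(k+r)}∘⋯∘Φ^{(k+1)}[ρ̂] − Φ̃_{ξ_r}∘⋯∘Φ̃_{ξ_1}[ρ̂]‖
  ≤ (d₁/(d⁻¹−1)) d^{−r−1} Tr(Φ^{(k+r)}∘⋯∘Φ^{(k+1)}[ρ̂])`. -/
theorem perturbative_comparison {σ m : Type*} [Fintype m] [DecidableEq m]
    (Φ : List σ → (Matrix m m ℂ →ₗ[ℂ] Matrix m m ℂ))
    (Φt : σ → (Matrix m m ℂ →ₗ[ℂ] Matrix m m ℂ))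
    (hCP : ∀ l, IsCompletelyPositive (Φ l)) (hCPt : ∀ ξ, IsCompletelyPositive (Φt ξ))
    (htni : ∀ (l : List σ) (ρ : Matrix m m ℂ), ρ.PosSemidef →
      ((Φ l ρ).trace).re ≤ (ρ.trace).re)
    (htnit : ∀ (ξ : σ) (ρ : Matrix m m ℂ), ρ.PosSemidef →
      ((Φt ξ ρ).trace).re ≤ (ρ.trace).re)
    (d₁ d₂ : ℝ) (hd₁0 : 0 ≤ d₁) (hd₁₂ : d₁ < d₂) (hd₂1 : d₂ ≤ 1)
    (hdlt : d₂ - d₁ < 1)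
    (hi : ∀ (l : List σ) (ξ : σ),
      traceMapNorm (Φ (l ++ [ξ]) - Φt ξ) ≤ d₁ * traceMapNorm (Φt ξ))
    (hii : ∀ (ξ : σ) (ρ : Matrix m m ℂ), ρ.PosSemidef → ρ.trace = 1 →
      d₂ * traceMapNorm (Φt ξ) ≤ ((Φt ξ ρ).trace).re) :
    (∀ (l : List σ) (ξ : σ) (ρ₁ ρ₂ : Matrix m m ℂ),
      traceNorm (Φ (l ++ [ξ]) ρ₁ - Φt ξ ρ₂) ≤
        traceMapNorm (Φt ξ) * (d₁ * traceNorm ρ₁ + traceNorm (ρ₁ - ρ₂))) ∧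
    (∀ (η ξl : List σ) (ρhat : Matrix m m ℂ), ρhat.PosSemidef → ρhat.trace = 1 →
      traceNorm (chain Φ η ξl ρhat - tchain Φt ξl ρhat) ≤
        (d₁ / ((d₂ - d₁)⁻¹ - 1)) * (d₂ - d₁) ^ (-(ξl.length : ℝ) - 1) *
          ((chain Φ η ξl ρhat).trace).re) := by
  set d : ℝ := d₂ - d₁ with hd
  have hd0 : 0 < d := by simp [hd]; linarith
  have hd1 : d < 1 := hdlt
  -- one-step estimate
  have step : ∀ (l : List σ) (ξ : σ) (ρ₁ ρ₂ : Matrix m m ℂ),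
      traceNorm (Φ (l ++ [ξ]) ρ₁ - Φt ξ ρ₂) ≤
        traceMapNorm (Φt ξ) * (d₁ * traceNorm ρ₁ + traceNorm (ρ₁ - ρ₂)) := by
    intro l ξ ρ₁ ρ₂
    have e : Φ (l ++ [ξ]) ρ₁ - Φt ξ ρ₂
        = (Φ (l ++ [ξ]) - Φt ξ) ρ₁ + Φt ξ (ρ₁ - ρ₂) := by
      simp only [LinearMap.sub_apply, map_sub]
      abel
    rw [e]
    calc traceNorm ((Φ (l ++ [ξ]) - Φt ξ) ρ₁ + Φt ξ (ρ₁ - ρ₂))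
        ≤ traceNorm ((Φ (l ++ [ξ]) - Φt ξ) ρ₁) + traceNorm (Φt ξ (ρ₁ - ρ₂)) :=
          TN.traceNorm_add_le _ _
      _ ≤ traceMapNorm (Φ (l ++ [ξ]) - Φt ξ) * traceNorm ρ₁
          + traceMapNorm (Φt ξ) * traceNorm (ρ₁ - ρ₂) :=
          add_le_add (TN.tmn_bound _ _) (TN.tmn_bound _ _)
      _ ≤ d₁ * traceMapNorm (Φt ξ) * traceNorm ρ₁
          + traceMapNorm (Φt ξ) * traceNorm (ρ₁ - ρ₂) := by
          have := mul_le_mul_of_nonneg_right (hi l ξ) (TN.traceNorm_nonneg ρ₁)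
          linarith
      _ = traceMapNorm (Φt ξ) * (d₁ * traceNorm ρ₁ + traceNorm (ρ₁ - ρ₂)) := by ring
  refine ⟨step, ?_⟩
  -- extended assumption (ii) for arbitrary PSD matrices
  have hii' : ∀ (ξ : σ) (ρ : Matrix m m ℂ), ρ.PosSemidef →
      d₂ * traceMapNorm (Φt ξ) * (ρ.trace).re ≤ ((Φt ξ ρ).trace).re := by
    intro ξ ρ hρ
    rcases eq_or_lt_of_le (TN.psd_re_trace_nonneg hρ) with h0 | h0
    · rw [TN.psd_trace_zero hρ h0.symm]
      simp [← h0]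
    · set t : ℝ := (ρ.trace).re with ht
      have hρ' : ((((t⁻¹ : ℝ)) : ℂ) • ρ).PosSemidef :=
        TN.psd_smul_real hρ (inv_nonneg.mpr (le_of_lt h0))
      have htr : ((((t⁻¹ : ℝ)) : ℂ) • ρ).trace = 1 := by
        rw [trace_smul, smul_eq_mul, TN.psd_trace_real hρ, ← ht, ← Complex.ofReal_mul,
          inv_mul_cancel₀ (ne_of_gt h0), Complex.ofReal_one]
      have h2 := hii ξ _ hρ' htr
      rw [_root_.map_smul, trace_smul, smul_eq_mul, Complex.re_ofReal_mul] at h2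
      calc d₂ * traceMapNorm (Φt ξ) * t = (d₂ * traceMapNorm (Φt ξ)) * t := by ring
        _ ≤ (t⁻¹ * ((Φt ξ) ρ).trace.re) * t := by
            exact mul_le_mul_of_nonneg_right h2 (le_of_lt h0)
        _ = ((Φt ξ) ρ).trace.re := by field_simp
  -- trace lower bound for one true step
  have tlow : ∀ (l : List σ) (ξ : σ) (ρ : Matrix m m ℂ), ρ.PosSemidef →
      d * traceMapNorm (Φt ξ) * (ρ.trace).re ≤ ((Φ (l ++ [ξ]) ρ).trace).re := by
    intro l ξ ρ hρ
    have e : (Φ (l ++ [ξ]) ρ).trace = (Φt ξ ρ).trace + (((Φ (l ++ [ξ]) - Φt ξ) ρ).trace) := by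
      simp only [LinearMap.sub_apply, trace_sub]
      ring
    have h1 : -(traceNorm ((Φ (l ++ [ξ]) - Φt ξ) ρ)) ≤ (((Φ (l ++ [ξ]) - Φt ξ) ρ).trace).re :=
      TN.neg_traceNorm_le_re_trace _
    have h2 : traceNorm ((Φ (l ++ [ξ]) - Φt ξ) ρ) ≤ d₁ * traceMapNorm (Φt ξ) * (ρ.trace).re := by
      calc traceNorm ((Φ (l ++ [ξ]) - Φt ξ) ρ)
          ≤ traceMapNorm (Φ (l ++ [ξ]) - Φt ξ) * traceNorm ρ := TN.tmn_bound _ _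
        _ ≤ d₁ * traceMapNorm (Φt ξ) * traceNorm ρ :=
            mul_le_mul_of_nonneg_right (hi l ξ) (TN.traceNorm_nonneg ρ)
        _ = d₁ * traceMapNorm (Φt ξ) * (ρ.trace).re := by rw [TN.psd_traceNorm hρ]
    have h3 := hii' ξ ρ hρ
    have e2 : ((Φ (l ++ [ξ]) ρ).trace).re
        = ((Φt ξ ρ).trace).re + (((Φ (l ++ [ξ]) - Φt ξ) ρ).trace).re := by
      rw [e, Complex.add_re]
    rw [e2, hd]
    have : d₂ * traceMapNorm (Φt ξ) * (ρ.trace).re ≤ ((Φt ξ ρ).trace).re := h3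
    nlinarith [TN.psd_re_trace_nonneg hρ, TN.tmn_nonneg (Φt ξ)]
  -- the iteration
  intro η ξl ρhat hψ htr1
  -- generalized induction with coefficient c r = d₁ ((d^r)⁻¹ - 1)/(1-d)
  have main : ∀ (t : List σ) (η : List σ),
      traceNorm (chain Φ η t ρhat - tchain Φt t ρhat)
        ≤ d₁ * ((d ^ t.length)⁻¹ - 1) / (1 - d) * ((chain Φ η t ρhat).trace).re := by
    intro t
    induction t using List.reverseRecOn with
    | nil =>
      intro η
      show traceNorm (ρhat - ρhat) ≤ _
      rw [sub_self]
      have : traceNorm (0 : Matrix m m ℂ) = 0 := by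
        have h := TN.psd_traceNorm (Matrix.PosSemidef.zero (n := m) (R := ℂ))
        simpa using h
      rw [this]
      simp
    | append_singleton t ξ ih =>
      intro η
      rw [TN.chain_snoc, TN.tchain_snoc]
      set ρh := chain Φ η t ρhat with hρh
      set ρt := tchain Φt t ρhat with hρt
      have hρhp : ρh.PosSemidef := TN.chain_psd Φ hCP t η hψ
      set T : ℝ := (ρh.trace).re with hT
      have hT0 : 0 ≤ T := TN.psd_re_trace_nonneg hρhp
      set r : ℕ := t.length with hr
      set c : ℝ := d₁ * ((d ^ r)⁻¹ - 1) / (1 - d) with hc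
      have hc0 : 0 ≤ c := by
        apply div_nonneg _ (by linarith)
        have : d ^ r ≤ 1 := pow_le_one₀ (le_of_lt hd0) (le_of_lt hd1)
        have h2 : 1 ≤ (d ^ r)⁻¹ := (one_le_inv₀ (pow_pos hd0 r)).mpr this
        nlinarith
      have h1 : traceNorm (Φ (η ++ t ++ [ξ]) ρh - Φt ξ ρt)
          ≤ traceMapNorm (Φt ξ) * (d₁ * T + c * T) := by
        calc traceNorm (Φ (η ++ t ++ [ξ]) ρh - Φt ξ ρt)
            ≤ traceMapNorm (Φt ξ) * (d₁ * traceNorm ρh + traceNorm (ρh - ρt)) :=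
              step (η ++ t) ξ ρh ρt
          _ ≤ traceMapNorm (Φt ξ) * (d₁ * T + c * T) := by
              apply mul_le_mul_of_nonneg_left _ (TN.tmn_nonneg (Φt ξ))
              have e1 : traceNorm ρh = T := TN.psd_traceNorm hρhp
              have e2 : traceNorm (ρh - ρt) ≤ c * T := ih η
              rw [e1]
              linarith [e2]
      have h2 : d * (traceMapNorm (Φt ξ) * T) ≤ ((Φ (η ++ t ++ [ξ]) ρh).trace).re := by
        have := tlow (η ++ t) ξ ρh hρhp
        calc d * (traceMapNorm (Φt ξ) * T) = d * traceMapNorm (Φt ξ) * (ρh.trace).re := by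
              rw [← hT]; ring
          _ ≤ _ := this
      -- combine
      have hlen : (t ++ [ξ]).length = r + 1 := by simp [hr]
      rw [hlen]
      have hgoal : traceNorm (Φ (η ++ t ++ [ξ]) ρh - Φt ξ ρt)
          ≤ d₁ * ((d ^ (r+1))⁻¹ - 1) / (1 - d) * ((Φ (η ++ t ++ [ξ]) ρh).trace).re := by
        have key : (d₁ + c) * (traceMapNorm (Φt ξ) * T)
            ≤ d₁ * ((d ^ (r+1))⁻¹ - 1) / (1 - d) * ((Φ (η ++ t ++ [ξ]) ρh).trace).re := by
          have hcoef : d₁ * ((d ^ (r+1))⁻¹ - 1) / (1 - d) = (d₁ + c) / d := by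
            rw [hc]; exact TN.coef_id d d₁ hd0 hd1 r
          rw [hcoef]
          have hTnn : 0 ≤ traceMapNorm (Φt ξ) * T :=
            mul_nonneg (TN.tmn_nonneg (Φt ξ)) hT0
          have hEnn : 0 ≤ (d₁ + c) := by linarith
          calc (d₁ + c) * (traceMapNorm (Φt ξ) * T)
              = (d₁ + c) / d * (d * (traceMapNorm (Φt ξ) * T)) :=
                (TN.div_mul_cancel_left' _ _ _ (ne_of_gt hd0)).symm
            _ ≤ (d₁ + c) / d * ((Φ (η ++ t ++ [ξ]) ρh).trace).re := by
                apply mul_le_mul_of_nonneg_left h2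
                positivity
        calc traceNorm (Φ (η ++ t ++ [ξ]) ρh - Φt ξ ρt)
            ≤ traceMapNorm (Φt ξ) * (d₁ * T + c * T) := h1
          _ = (d₁ + c) * (traceMapNorm (Φt ξ) * T) := by ring
          _ ≤ _ := key
      exact hgoal
  have hmain := main ξl η
  -- compare coefficients
  have hfin : d₁ * ((d ^ ξl.length)⁻¹ - 1) / (1 - d) * ((chain Φ η ξl ρhat).trace).re
      ≤ (d₁ / (d⁻¹ - 1)) * d ^ (-(ξl.length : ℝ) - 1) * ((chain Φ η ξl ρhat).trace).re := by
    apply mul_le_mul_of_nonneg_right _ (TN.psd_re_trace_nonneg (TN.chain_psd Φ hCP ξl η hψ))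
    have hrpow : d ^ (-(ξl.length : ℝ) - 1) = (d ^ (ξl.length + 1))⁻¹ := by
      rw [show -(ξl.length : ℝ) - 1 = -(((ξl.length + 1 : ℕ) : ℝ)) by push_cast; ring]
      rw [Real.rpow_neg (le_of_lt hd0), Real.rpow_natCast]
    rw [hrpow]
    exact TN.coef_le d d₁ hd0 hd1 hd₁0 ξl.length
  exact hmain.trans hfin
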